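/- The center of a simple Euclidean Jordan algebra J (elements z with z(ab) = (za)b for all a, b) equals R·e, where e is the unit. -/

import Mathlib

/-- The center of a simple Euclidean Jordan algebra `J` (the set of `z` with
`z * (a * b) = (z * a) * b` for all `a, b`) is exactly `ℝ • 1`. Here simplicity
means that the only ideals (submodules stable by multiplication) are `⊥` and `⊤`. -/
theorem center_of_simple_euclidean_jordan_algebra
    (J : Type*) [NonAssocRing J] [Module ℝ J]
    [SMulCommClass ℝ J J] [IsScalarTower ℝ J J] [FiniteDimensional ℝ J]
    [Nontrivial J]
    (hcomm : ∀ a b : J, a * b = b * a)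
    (hjordan : ∀ a b : J, a * (b * (a * a)) = (a * b) * (a * a))
    (hformallyreal : ∀ a b : J, a * a + b * b = 0 → a = 0 ∧ b = 0)
    (hsimple : ∀ I : Submodule ℝ J, (∀ x : J, ∀ a ∈ I, x * a ∈ I) → I = ⊥ ∨ I = ⊤) :
    {z : J | ∀ a b : J, z * (a * b) = (z * a) * b} =
      Set.range (fun r : ℝ => r • (1 : J)) := by
  ext z
  simp only [Set.mem_setOf_eq, Set.mem_range]
  constructor
  · intro hz
    -- `f` is left multiplication by `z`.
    set f : Module.End ℝ J := LinearMap.mulLeft ℝ z with hf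
    have hfa : ∀ a : J, f a = z * a := fun a => rfl
    have hint : IsIntegral ℝ f := Algebra.IsIntegral.isIntegral (R := ℝ) f
    set p : Polynomial ℝ := minpoly ℝ f with hp
    have hpne : p ≠ 0 := minpoly.ne_zero hint
    have hpdeg : p.degree ≠ 0 := by
      have := minpoly.degree_pos hint
      rw [← hp] at this
      exact this.ne'
    -- find a complex root of the minimal polynomial
    obtain ⟨w, hw⟩ := IsAlgClosed.exists_aeval_eq_zero ℂ p hpdeg
    -- Claim: `f` has a real eigenvalue.
    have key : ∃ μ : ℝ, f.HasEigenvalue μ := by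
      by_cases him : w.im = 0
      · lift w to ℝ using him
        refine ⟨w, Module.End.hasEigenvalue_of_isRoot ?_⟩
        erw [Polynomial.aeval_ofReal, Complex.ofReal_eq_zero] at hw
        exact hw
      · -- the quadratic `X² - 2 re(w) X + ‖w‖²` divides `p`; derive a contradiction
        exfalso
        obtain ⟨g, hg⟩ := p.quadratic_dvd_of_aeval_eq_zero_im_ne_zero hw him
        set q : Polynomial ℝ := Polynomial.X ^ 2 - Polynomial.C (2 * w.re) * Polynomial.X
            + Polynomial.C (‖w‖ ^ 2) with hqdef
        have hdq : q.degree = 2 := by rw [hqdef]; compute_degree!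
        have hgne : Polynomial.aeval f g ≠ 0 := by
          intro h0
          have hgz : g ≠ 0 := by
            rintro rfl; rw [mul_zero] at hg; exact hpne hg
          have hle := minpoly.degree_le_of_ne_zero ℝ f hgz h0
          rw [← hp] at hle
          have hqz : q ≠ 0 := fun h => by simp [h] at hdq
          have hnd : p.natDegree = 2 + g.natDegree := by
            rw [hg, Polynomial.natDegree_mul hqz hgz,
              Polynomial.natDegree_eq_of_degree_eq_some hdq]
          have := Polynomial.natDegree_le_natDegree hle
          omega
        obtain ⟨a, ha⟩ := DFunLike.ne_iff.mp hgne
        set u : J := Polynomial.aeval f g a with hu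
        have hu0 : u ≠ 0 := by simpa using ha
        -- quadratic relation on `u`
        have hq : z * (z * u) - (2 * w.re) • (z * u) + (‖w‖ ^ 2) • u = 0 := by
          have h1 : (Polynomial.aeval f) p a = 0 := by rw [hp, minpoly.aeval]; rfl
          rw [hg, map_mul, Module.End.mul_apply, ← hu, hqdef, map_add, map_sub, map_mul,
            map_pow, Polynomial.aeval_X, Polynomial.aeval_C, Polynomial.aeval_C] at h1
          simpa only [LinearMap.add_apply, LinearMap.sub_apply, Module.End.mul_apply,
            Module.algebraMap_end_apply, hfa, sq] using h1
        have hn : ‖w‖ ^ 2 = w.re ^ 2 + w.im ^ 2 := by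
          rw [Complex.sq_norm, Complex.normSq_apply]; ring
        rw [hn] at hq
        -- shift: `z' = z - re(w) • 1` is also central.
        set z' : J := z - w.re • (1 : J) with hz'
        have hz'c : ∀ a b : J, z' * (a * b) = (z' * a) * b := by
          intro a b
          simp only [hz', sub_mul, hz a b, smul_mul_assoc, one_mul]
        have hin : z' * u = z * u - w.re • u := by
          rw [hz', sub_mul, smul_mul_assoc, one_mul]
        have hz'u : z' * (z' * u) = -(w.im ^ 2) • u := by
          rw [hin, hz', sub_mul, smul_mul_assoc, one_mul, mul_sub, mul_smul_comm]
          linear_combination (norm := module) hq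
        -- formal reality contradiction with `s = z' * u` and `w.im • u`
        have hs : (z' * u) * (z' * u) = -(w.im ^ 2) • (u * u) := by
          calc (z' * u) * (z' * u) = z' * (u * (z' * u)) := (hz'c u (z' * u)).symm
            _ = z' * ((z' * u) * u) := by rw [hcomm u (z' * u)]
            _ = (z' * (z' * u)) * u := hz'c (z' * u) u
            _ = (-(w.im ^ 2) • u) * u := by rw [hz'u]
            _ = -(w.im ^ 2) • (u * u) := smul_mul_assoc _ _ _
        have hsum : (z' * u) * (z' * u) + (w.im • u) * (w.im • u) = 0 := by
          rw [hs, smul_mul_assoc, mul_smul_comm, smul_smul]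
          module
        have := (hformallyreal _ _ hsum).2
        rcases smul_eq_zero.mp this with h | h
        · exact him h
        · exact hu0 h
    obtain ⟨μ, hμ⟩ := key
    -- eigenspace of `f` for `μ` is an ideal
    have hideal : ∀ x : J, ∀ a ∈ f.eigenspace μ, x * a ∈ f.eigenspace μ := by
      intro x a ha
      rw [Module.End.mem_eigenspace_iff] at ha ⊢
      rw [hfa] at ha ⊢
      calc z * (x * a) = z * (a * x) := by rw [hcomm x a]
        _ = (z * a) * x := hz a x
        _ = x * (z * a) := hcomm _ _
        _ = x * (μ • a) := by rw [ha]
        _ = μ • (x * a) := mul_smul_comm μ x a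
    rcases hsimple _ hideal with h | h
    · exact absurd h hμ
    · have h1 : (1 : J) ∈ f.eigenspace μ := h ▸ Submodule.mem_top
      rw [Module.End.mem_eigenspace_iff, hfa] at h1
      exact ⟨μ, by rw [← h1, mul_one]⟩
  · rintro ⟨r, rfl⟩ a b
    rw [smul_mul_assoc, smul_mul_assoc, smul_mul_assoc, one_mul, one_mul]
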